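/- For PSD n×n Hermitian matrices A, B and every real u ≥ 0: tr((A−u)_+) + tr((B−u)_+) ≤ tr((A+B−u)_+), where (X)_+ = (X+|X|)/2 is the positive part and (A−u)_+ means (A − uI)_+. -/

import Mathlib

open Matrix
open scoped ComplexOrder

/-- `f` applied to a matrix via the spectral decomposition (junk value `0` if
the matrix is not Hermitian). -/
noncomputable def matFun {n : ℕ} (f : ℝ → ℝ) (A : Matrix (Fin n) (Fin n) ℂ) :
    Matrix (Fin n) (Fin n) ℂ :=
  if hA : A.IsHermitian then
    (hA.eigenvectorUnitary : Matrix (Fin n) (Fin n) ℂ) *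
      Matrix.diagonal (fun i => (f (hA.eigenvalues i) : ℂ)) *
      (star hA.eigenvectorUnitary : Matrix (Fin n) (Fin n) ℂ)
  else 0

/-- The eigenvalues of a Hermitian matrix, sorted in non-increasing order
(junk value `0` if the matrix is not Hermitian). -/
noncomputable def eigsDesc {n : ℕ} (A : Matrix (Fin n) (Fin n) ℂ) : Fin n → ℝ :=
  if hA : A.IsHermitian then (fun k => hA.eigenvalues (Tuple.sort hA.eigenvalues (Fin.rev k)))
  else 0

/-- The absolute value `|X| = (XᴴX)^{1/2}` of a matrix. -/
noncomputable def matAbs {n : ℕ} (X : Matrix (Fin n) (Fin n) ℂ) : Matrix (Fin n) (Fin n) ℂ :=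
  (Matrix.posSemidef_conjTranspose_mul_self X).isHermitian.eigenvectorUnitary.1 *
    diagonal ((↑) ∘ (√·) ∘ (Matrix.posSemidef_conjTranspose_mul_self X).isHermitian.eigenvalues) *
    (star (Matrix.posSemidef_conjTranspose_mul_self X).isHermitian.eigenvectorUnitary :
      Matrix (Fin n) (Fin n) ℂ)

/-- The singular values of `X`, sorted in non-increasing order. -/
noncomputable def svalsDesc {n : ℕ} (X : Matrix (Fin n) (Fin n) ℂ) : Fin n → ℝ :=
  eigsDesc (matAbs X)

/-- Sum of the first `k` entries of a vector indexed by `Fin n`. -/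
noncomputable def kSum {n : ℕ} (μ : Fin n → ℝ) (k : ℕ) : ℝ :=
  ∑ j ∈ Finset.univ.filter (fun j : Fin n => (j : ℕ) < k), μ j

/-- The operator norm: the largest singular value. -/
noncomputable def opNorm {n : ℕ} (X : Matrix (Fin n) (Fin n) ℂ) : ℝ :=
  ⨆ i, svalsDesc X i

namespace TPPaux

variable {n : ℕ}

lemma matFun_eq (f : ℝ → ℝ) {A : Matrix (Fin n) (Fin n) ℂ} (hA : A.IsHermitian) :
    matFun f A = (hA.eigenvectorUnitary : Matrix (Fin n) (Fin n) ℂ) *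
      Matrix.diagonal (fun i => (f (hA.eigenvalues i) : ℂ)) *
      star (hA.eigenvectorUnitary : Matrix (Fin n) (Fin n) ℂ) := by
  unfold matFun
  rw [dif_pos hA]

lemma diag_herm (f : ℝ → ℝ) (e : Fin n → ℝ) :
    (Matrix.diagonal (fun i => (f (e i) : ℂ)))ᴴ = Matrix.diagonal (fun i => (f (e i) : ℂ)) := by
  rw [Matrix.diagonal_conjTranspose]
  congr 1
  funext i
  simp [Pi.star_def, Complex.star_def, Complex.conj_ofReal]

lemma matFun_herm (f : ℝ → ℝ) {A : Matrix (Fin n) (Fin n) ℂ} (hA : A.IsHermitian) :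
    (matFun f A).IsHermitian := by
  rw [matFun_eq f hA]
  show _ᴴ = _
  rw [Matrix.conjTranspose_mul, Matrix.conjTranspose_mul, diag_herm,
    ← Matrix.star_eq_conjTranspose, ← Matrix.star_eq_conjTranspose, star_star, mul_assoc]

lemma matFun_mul (f g : ℝ → ℝ) {A : Matrix (Fin n) (Fin n) ℂ} (hA : A.IsHermitian) :
    matFun f A * matFun g A = matFun (fun x => f x * g x) A := by
  rw [matFun_eq f hA, matFun_eq g hA, matFun_eq (fun x => f x * g x) hA]
  have h1 : star (hA.eigenvectorUnitary : Matrix (Fin n) (Fin n) ℂ) *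
      (hA.eigenvectorUnitary : Matrix (Fin n) (Fin n) ℂ) = 1 := UnitaryGroup.star_mul_self _
  simp only [mul_assoc]
  rw [← mul_assoc (star (hA.eigenvectorUnitary : Matrix (Fin n) (Fin n) ℂ)), h1, one_mul,
    ← mul_assoc (Matrix.diagonal _), Matrix.diagonal_mul_diagonal]
  congr 2
  funext i
  push_cast
  ring

lemma matFun_trace (f : ℝ → ℝ) {A : Matrix (Fin n) (Fin n) ℂ} (hA : A.IsHermitian) :
    (matFun f A).trace = ((∑ i, f (hA.eigenvalues i) : ℝ) : ℂ) := by
  rw [matFun_eq f hA, Matrix.trace_mul_cycle, UnitaryGroup.star_mul_self, one_mul,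
    Matrix.trace_diagonal]
  push_cast
  rfl

lemma matFun_psd (f : ℝ → ℝ) {A : Matrix (Fin n) (Fin n) ℂ} (hA : A.IsHermitian)
    (hf : ∀ x, 0 ≤ f x) : (matFun f A).PosSemidef := by
  rw [matFun_eq f hA, Matrix.star_eq_conjTranspose]
  exact (Matrix.posSemidef_diagonal_iff.mpr
    (fun i => Complex.zero_le_real.mpr (hf _))).mul_mul_conjTranspose_same _

lemma matFun_id {A : Matrix (Fin n) (Fin n) ℂ} (hA : A.IsHermitian) :
    matFun (fun x => x) A = A := by
  rw [matFun_eq (fun x => x) hA]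
  conv_rhs => rw [hA.spectral_theorem]
  rfl

lemma matFun_sub (f g : ℝ → ℝ) {A : Matrix (Fin n) (Fin n) ℂ} (hA : A.IsHermitian) :
    matFun f A - matFun g A = matFun (fun x => f x - g x) A := by
  rw [matFun_eq f hA, matFun_eq g hA, matFun_eq (fun x => f x - g x) hA,
    ← Matrix.sub_mul, ← Matrix.mul_sub, Matrix.diagonal_sub]
  congr 2
  funext i
  push_cast
  ring

lemma matFun_ge_self {A : Matrix (Fin n) (Fin n) ℂ} (hA : A.IsHermitian) (f : ℝ → ℝ)
    (hf : ∀ x, x ≤ f x) : (matFun f A - A).PosSemidef := by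
  have h2 := matFun_sub f (fun x => x) hA
  rw [matFun_id hA] at h2
  rw [h2]
  exact matFun_psd _ hA fun x => sub_nonneg.mpr (hf x)

lemma trace_re_nonneg_of_psd {M : Matrix (Fin n) (Fin n) ℂ} (hM : M.PosSemidef) :
    0 ≤ M.trace.re := by
  have htr : M.trace = ∑ i, M i i := rfl
  rw [htr]
  rw [show (∑ i, M i i).re = ∑ i, (M i i).re from Complex.re_sum _ _]
  refine Finset.sum_nonneg fun i _ => ?_
  have h := hM.re_dotProduct_nonneg (Pi.single i 1)
  have heq : star (Pi.single i 1 : Fin n → ℂ) ⬝ᵥ (M *ᵥ Pi.single i 1) = M i i := by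
    simp [dotProduct, Matrix.mulVec_single, Pi.single_apply, apply_ite, mul_comm]
  rwa [heq] at h

lemma trace_mul_re_nonneg {M N : Matrix (Fin n) (Fin n) ℂ} (hM : M.PosSemidef)
    (hN : N.PosSemidef) : 0 ≤ (M * N).trace.re := by
  obtain ⟨R, hR⟩ : ∃ R : Matrix (Fin n) (Fin n) ℂ, N = Rᴴ * R := by
    open scoped MatrixOrder in
    exact CStarAlgebra.nonneg_iff_eq_star_mul_self.mp hN.nonneg
  rw [hR, ← mul_assoc, Matrix.trace_mul_cycle]
  exact trace_re_nonneg_of_psd (hM.mul_mul_conjTranspose_same R)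

lemma psd_of_proj {M : Matrix (Fin n) (Fin n) ℂ} (h1 : Mᴴ = M) (h2 : M * M = M) :
    M.PosSemidef := by
  have h3 : M = Mᴴ * M := by rw [h1, h2]
  rw [h3]
  exact Matrix.posSemidef_conjTranspose_mul_self M

lemma ext_of_mulVec {M N : Matrix (Fin n) (Fin n) ℂ} (h : ∀ x, M *ᵥ x = N *ᵥ x) : M = N := by
  ext i j
  have := congrFun (h (Pi.single j 1)) i
  simpa [Matrix.mulVec_single] using this

lemma sum_vecMulVec_mulVec {r : ℕ} (v : Fin r → (Fin n → ℂ)) (w : Fin n → ℂ) :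
    (∑ j, Matrix.vecMulVec (v j) (star (v j))) *ᵥ w
      = ∑ j, ((star (v j)) ⬝ᵥ w) • v j := by
  funext i
  simp only [Matrix.mulVec, dotProduct, Finset.sum_apply, Matrix.sum_apply,
    Matrix.vecMulVec_apply, Pi.smul_apply, smul_eq_mul, Finset.sum_mul, Finset.mul_sum,
    Pi.star_apply]
  rw [Finset.sum_comm]
  refine Finset.sum_congr rfl fun j _ => Finset.sum_congr rfl fun k _ => by ring

lemma vecMulVec_star_herm (a : Fin n → ℂ) :
    (Matrix.vecMulVec a (star a))ᴴ = Matrix.vecMulVec a (star a) := by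
  ext i k
  simp [Matrix.conjTranspose_apply, Matrix.vecMulVec_apply, mul_comm]

end TPPaux

open TPPaux Module

/-- For PSD `A, B` and `u ≥ 0`:
`tr((A−u)₊) + tr((B−u)₊) ≤ tr((A+B−u)₊)`. -/
theorem trace_posPart_subadd {n : ℕ} (A B : Matrix (Fin n) (Fin n) ℂ)
    (hA : A.PosSemidef) (hB : B.PosSemidef) (u : ℝ) (hu : 0 ≤ u) :
    ((matFun (fun x => max x 0) (A - (u : ℂ) • 1)).trace).re +
      ((matFun (fun x => max x 0) (B - (u : ℂ) • 1)).trace).re ≤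
      ((matFun (fun x => max x 0) (A + B - (u : ℂ) • 1)).trace).re := by
  classical
  have h1H : ((u:ℂ) • (1 : Matrix (Fin n) (Fin n) ℂ)).IsHermitian := by
    show _ᴴ = _
    rw [Matrix.conjTranspose_smul, Matrix.conjTranspose_one, Complex.star_def,
      Complex.conj_ofReal]
  set X := A - (u:ℂ) • (1 : Matrix (Fin n) (Fin n) ℂ) with hXdef
  set Y := B - (u:ℂ) • (1 : Matrix (Fin n) (Fin n) ℂ) with hYdef
  set Z := A + B - (u:ℂ) • (1 : Matrix (Fin n) (Fin n) ℂ) with hZdef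
  have hX : X.IsHermitian := hA.1.sub h1H
  have hY : Y.IsHermitian := hB.1.sub h1H
  have hZ : Z.IsHermitian := (hA.1.add hB.1).sub h1H
  set pos : ℝ → ℝ := fun x => max x 0 with hpos
  set χ : ℝ → ℝ := fun x => if 0 < x then (1:ℝ) else 0 with hχ
  have hχχ : ∀ x, χ x * χ x = χ x := by
    intro x; by_cases h : 0 < x <;> simp [hχ, h]
  have hxχ : ∀ x, x * χ x = pos x := by
    intro x
    by_cases h : 0 < x
    · simp [hχ, hpos, h, max_eq_left h.le]
    · simp [hχ, hpos, h, max_eq_right (le_of_not_gt h)]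
  set P := matFun χ X with hPdef
  set Q := matFun χ Y with hQdef
  have hPH : Pᴴ = P := matFun_herm χ hX
  have hQH : Qᴴ = Q := matFun_herm χ hY
  have hPP : P * P = P := by
    have h := matFun_mul χ χ hX; simp only [hχχ] at h; exact h
  have hQQ : Q * Q = Q := by
    have h := matFun_mul χ χ hY; simp only [hχχ] at h; exact h
  have hXP : X * P = matFun pos X := by
    have h := matFun_mul (fun x => x) χ hX
    rw [matFun_id hX] at h
    simp only [hxχ] at h
    exact h
  have hYQ : Y * Q = matFun pos Y := by
    have h := matFun_mul (fun x => x) χ hY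
    rw [matFun_id hY] at h
    simp only [hxχ] at h
    exact h
  set sA := Finset.univ.filter (fun i => 0 < hX.eigenvalues i) with hsA
  set sB := Finset.univ.filter (fun i => 0 < hY.eigenvalues i) with hsB
  have htrP : P.trace = (((sA.card : ℝ)) : ℂ) := by
    rw [hPdef, matFun_trace χ hX]
    congr 1
    simp only [hχ]
    rw [Finset.sum_boole, hsA]
  have htrQ : Q.trace = (((sB.card : ℝ)) : ℂ) := by
    rw [hQdef, matFun_trace χ hY]
    congr 1
    simp only [hχ]
    rw [Finset.sum_boole, hsB]
  -- the projection onto the span of the ranges of `P` and `Q`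
  set e := WithLp.linearEquiv 2 ℂ (Fin n → ℂ) with he
  set UA := (hX.eigenvectorUnitary : Matrix (Fin n) (Fin n) ℂ) with hUA
  set UB := (hY.eigenvectorUnitary : Matrix (Fin n) (Fin n) ℂ) with hUB
  set colA : Fin n → EuclideanSpace ℂ (Fin n) := fun i => e.symm (fun k => UA k i) with hcolA
  set colB : Fin n → EuclideanSpace ℂ (Fin n) := fun i => e.symm (fun k => UB k i) with hcolB
  set V := Submodule.span ℂ
    (((sA.image colA ∪ sB.image colB : Finset (EuclideanSpace ℂ (Fin n)))) :
      Set (EuclideanSpace ℂ (Fin n))) with hV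
  have hrank : finrank ℂ V ≤ sA.card + sB.card := by
    refine le_trans (finrank_span_finset_le_card _) ?_
    exact le_trans (Finset.card_union_le _ _)
      (add_le_add Finset.card_image_le Finset.card_image_le)
  set b := stdOrthonormalBasis ℂ V with hb
  set v : Fin (finrank ℂ V) → (Fin n → ℂ) := fun j => e (b j : EuclideanSpace ℂ (Fin n)) with hv
  have o1 : ∀ j l, star (v j) ⬝ᵥ v l = if j = l then 1 else 0 := by
    intro j l
    rw [dotProduct_comm]
    exact orthonormal_iff_ite.mp b.orthonormal j l
  have hdecomp : ∀ m : EuclideanSpace ℂ (Fin n), m ∈ V →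
      ∃ c : Fin (finrank ℂ V) → ℂ, e m = ∑ j, c j • v j := by
    intro m hm
    refine ⟨fun j => b.repr ⟨m, hm⟩ j, ?_⟩
    have h := b.sum_repr ⟨m, hm⟩
    have h2 := congrArg (fun w : V => e (w : EuclideanSpace ℂ (Fin n))) h
    simp only at h2
    rw [← h2]
    push_cast
    rw [map_sum]
    simp [_root_.map_smul]
    rfl
  have hmem : ∀ (W : Matrix (Fin n) (Fin n) ℂ) (hW : W.IsHermitian)
      (s : Finset (Fin n)) (hs : s = Finset.univ.filter (fun i => 0 < hW.eigenvalues i))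
      (col : Fin n → EuclideanSpace ℂ (Fin n))
      (hcol : col = fun i => e.symm (fun k => (hW.eigenvectorUnitary : Matrix (Fin n) (Fin n) ℂ) k i))
      (hsub : (s.image col : Set (EuclideanSpace ℂ (Fin n))) ⊆
        ((sA.image colA ∪ sB.image colB : Finset (EuclideanSpace ℂ (Fin n))) :
          Set (EuclideanSpace ℂ (Fin n))))
      (x : Fin n → ℂ), e.symm ((matFun χ W) *ᵥ x) ∈ V := by
    intro W hW s hs col hcol hsub x
    subst hcol
    set UW := (hW.eigenvectorUnitary : Matrix (Fin n) (Fin n) ℂ) with hUW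
    have hPe : matFun χ W = UW * Matrix.diagonal (fun i => (χ (hW.eigenvalues i) : ℂ)) * star UW :=
      matFun_eq χ hW
    set z := Matrix.diagonal (fun i => (χ (hW.eigenvalues i) : ℂ)) *ᵥ (star UW *ᵥ x) with hz
    have h1 : (matFun χ W) *ᵥ x = UW *ᵥ z := by
      rw [hPe, hz, Matrix.mulVec_mulVec, Matrix.mulVec_mulVec]
    have hzero : ∀ i, i ∉ s → z i = 0 := by
      intro i hi
      rw [hz, Matrix.mulVec_diagonal]
      have hneg : ¬ 0 < hW.eigenvalues i := by
        intro hcon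
        exact hi (hs ▸ Finset.mem_filter.mpr ⟨Finset.mem_univ i, hcon⟩)
      simp [hχ, hneg]
    have hsum : UW *ᵥ z = ∑ i, z i • (fun k => UW k i) := by
      funext k
      simp only [Matrix.mulVec, dotProduct, Finset.sum_apply, Pi.smul_apply, smul_eq_mul]
      exact Finset.sum_congr rfl fun i _ => mul_comm _ _
    rw [h1, hsum, map_sum]
    refine Submodule.sum_mem _ fun i _ => ?_
    by_cases hi : i ∈ s
    · rw [_root_.map_smul]
      refine Submodule.smul_mem _ _ (Submodule.subset_span ?_)
      refine hsub ?_
      exact Finset.mem_coe.mpr (Finset.mem_image_of_mem _ hi)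
    · rw [hzero i hi, zero_smul, map_zero]
      exact V.zero_mem
  have hmemP : ∀ x : Fin n → ℂ, e.symm (P *ᵥ x) ∈ V :=
    hmem X hX sA hsA colA hcolA
      (by intro y hy
          exact Finset.mem_coe.mpr (Finset.mem_union_left _ (Finset.mem_coe.mp hy)))
  have hmemQ : ∀ x : Fin n → ℂ, e.symm (Q *ᵥ x) ∈ V :=
    hmem Y hY sB hsB colB hcolB
      (by intro y hy
          exact Finset.mem_coe.mpr (Finset.mem_union_right _ (Finset.mem_coe.mp hy)))
  set C := ∑ j, Matrix.vecMulVec (v j) (star (v j)) with hC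
  have hCv : ∀ l, C *ᵥ v l = v l := by
    intro l
    have h := sum_vecMulVec_mulVec v (v l)
    rw [hC, h]
    simp [o1, ite_smul]
  have hfixsum : ∀ (c : Fin (finrank ℂ V) → ℂ),
      C *ᵥ (∑ j, c j • v j) = ∑ j, c j • v j := by
    intro c
    rw [← Matrix.mulVecLin_apply, map_sum]
    simp only [_root_.map_smul, Matrix.mulVecLin_apply, hCv]
  have hCfix : ∀ m : EuclideanSpace ℂ (Fin n), m ∈ V → C *ᵥ e m = e m := by
    intro m hm
    obtain ⟨c, hc⟩ := hdecomp m hm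
    rw [hc, hfixsum]
  have hCP : C * P = P := by
    apply ext_of_mulVec
    intro x
    have h2 := hCfix _ (hmemP x)
    rw [e.apply_symm_apply] at h2
    rw [← Matrix.mulVec_mulVec]
    exact h2
  have hCQ : C * Q = Q := by
    apply ext_of_mulVec
    intro x
    have h2 := hCfix _ (hmemQ x)
    rw [e.apply_symm_apply] at h2
    rw [← Matrix.mulVec_mulVec]
    exact h2
  have hCC : C * C = C := by
    apply ext_of_mulVec
    intro x
    rw [← Matrix.mulVec_mulVec]
    have hrep : C *ᵥ x = ∑ j, ((star (v j)) ⬝ᵥ x) • v j := sum_vecMulVec_mulVec v x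
    conv_lhs => rw [hrep]
    rw [hfixsum, ← hrep]
  have hCH : Cᴴ = C := by
    rw [hC, Matrix.conjTranspose_sum]
    exact Finset.sum_congr rfl fun j _ => vecMulVec_star_herm (v j)
  have htrC : C.trace = (((finrank ℂ V : ℝ)) : ℂ) := by
    rw [hC, Matrix.trace_sum]
    have h1 : ∀ j, (Matrix.vecMulVec (v j) (star (v j))).trace = 1 := by
      intro j
      have h := o1 j j
      rw [if_pos rfl] at h
      have ht : (Matrix.vecMulVec (v j) (star (v j))).trace = ∑ i, v j i * star (v j) i := rfl
      rw [ht, ← h]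
      exact Finset.sum_congr rfl fun i _ => mul_comm _ _
    rw [Finset.sum_congr rfl fun j _ => h1 j]
    simp
  -- positivity facts
  have hCpsd : C.PosSemidef := psd_of_proj hCH hCC
  have h1Cpsd : ((1 : Matrix (Fin n) (Fin n) ℂ) - C).PosSemidef := by
    refine psd_of_proj (by rw [Matrix.conjTranspose_sub, Matrix.conjTranspose_one, hCH]) ?_
    rw [sub_mul, one_mul, mul_sub, mul_one, hCC]
    simp
  have hPCeq : P * C = P := by
    have h := congrArg Matrix.conjTranspose hCP
    rwa [Matrix.conjTranspose_mul, hCH, hPH] at h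
  have hQCeq : Q * C = Q := by
    have h := congrArg Matrix.conjTranspose hCQ
    rwa [Matrix.conjTranspose_mul, hCH, hQH] at h
  have hCmPpsd : (C - P).PosSemidef := by
    refine psd_of_proj (by rw [Matrix.conjTranspose_sub, hCH, hPH]) ?_
    rw [sub_mul, mul_sub, mul_sub, hCC, hCP, hPCeq, hPP]
    simp
  have hCmQpsd : (C - Q).PosSemidef := by
    refine psd_of_proj (by rw [Matrix.conjTranspose_sub, hCH, hQH]) ?_
    rw [sub_mul, mul_sub, mul_sub, hCC, hCQ, hQCeq, hQQ]
    simp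
  -- trace identities
  have e1 : matFun pos Z = (matFun pos Z - Z) * C + Z * C + matFun pos Z * (1 - C) := by
    noncomm_ring
  have e2 : Z * C = A * C + B * C - (u:ℂ) • C := by
    rw [hZdef, sub_mul, add_mul, smul_mul_assoc, one_mul]
  have e3 : A * C = A * P + A * (C - P) := by rw [mul_sub]; abel
  have e4 : B * C = B * Q + B * (C - Q) := by rw [mul_sub]; abel
  have e5 : A * P = matFun pos X + (u:ℂ) • P := by
    have h : X * P = A * P - (u:ℂ) • P := by
      rw [hXdef, sub_mul, smul_mul_assoc, one_mul]
    rw [eq_sub_iff_add_eq] at h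
    rw [hXP] at h
    exact h.symm
  have e6 : B * Q = matFun pos Y + (u:ℂ) • Q := by
    have h : Y * Q = B * Q - (u:ℂ) • Q := by
      rw [hYdef, sub_mul, smul_mul_assoc, one_mul]
    rw [eq_sub_iff_add_eq] at h
    rw [hYQ] at h
    exact h.symm
  -- positivity of traces
  have t1 : 0 ≤ ((matFun pos Z - Z) * C).trace.re :=
    trace_mul_re_nonneg (matFun_ge_self hZ pos fun x => le_max_left x 0) hCpsd
  have t2 : 0 ≤ (matFun pos Z * (1 - C)).trace.re :=
    trace_mul_re_nonneg (matFun_psd pos hZ fun x => le_max_right x 0) h1Cpsd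
  have t3 : 0 ≤ (A * (C - P)).trace.re := trace_mul_re_nonneg hA hCmPpsd
  have t4 : 0 ≤ (B * (C - Q)).trace.re := trace_mul_re_nonneg hB hCmQpsd
  -- real-part computations
  have E1 : (matFun pos Z).trace.re = ((matFun pos Z - Z) * C).trace.re + (Z*C).trace.re
      + (matFun pos Z * (1-C)).trace.re := by
    conv_lhs => rw [e1]
    rw [Matrix.trace_add, Matrix.trace_add, Complex.add_re, Complex.add_re]
  have E2 : (Z*C).trace.re = (A*C).trace.re + (B*C).trace.re - u * (finrank ℂ V : ℝ) := by
    rw [e2, Matrix.trace_sub, Matrix.trace_add, Matrix.trace_smul, htrC, smul_eq_mul,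
      ← Complex.ofReal_mul, Complex.sub_re, Complex.add_re, Complex.ofReal_re]
  have E3 : (A*C).trace.re = (A*P).trace.re + (A*(C-P)).trace.re := by
    rw [e3, Matrix.trace_add, Complex.add_re]
  have E4 : (B*C).trace.re = (B*Q).trace.re + (B*(C-Q)).trace.re := by
    rw [e4, Matrix.trace_add, Complex.add_re]
  have E5 : (A*P).trace.re = (matFun pos X).trace.re + u * (sA.card : ℝ) := by
    rw [e5, Matrix.trace_add, Matrix.trace_smul, htrP, smul_eq_mul, ← Complex.ofReal_mul,
      Complex.add_re, Complex.ofReal_re]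
  have E6 : (B*Q).trace.re = (matFun pos Y).trace.re + u * (sB.card : ℝ) := by
    rw [e6, Matrix.trace_add, Matrix.trace_smul, htrQ, smul_eq_mul, ← Complex.ofReal_mul,
      Complex.add_re, Complex.ofReal_re]
  have hrankR : ((finrank ℂ V : ℝ)) ≤ (sA.card : ℝ) + (sB.card : ℝ) := by
    exact_mod_cast hrank
  have hprod : 0 ≤ u * ((sA.card : ℝ) + (sB.card : ℝ) - (finrank ℂ V : ℝ)) :=
    mul_nonneg hu (by linarith)
  rw [mul_sub, mul_add] at hprod
  linarith
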